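/- If X and Y are topological spaces each having the generalized Bolzano–Weierstrass property, then their topological sum (disjoint union) X ⊕ Y also has the generalized Bolzano–Weierstrass property: every sequence of subsets of X ⊕ Y has a subsequence converging in the sense of Kuratowski. -/
import Mathlib


open Set Topology TopologicalSpace

/-- Lower closed limit (Kuratowski) of the subsequence of `K` indexed by the
infinite set `A ⊆ ℕ`, with respect to the topology `t`: points all of whose
open neighborhoods meet `K n` for all but finitely many `n ∈ A`. -/
def kurLi {X : Type*} (t : TopologicalSpace X) (K : ℕ → Set X) (A : Set ℕ) : Set X :=
  {x | ∀ U : Set X, IsOpen[t] U → x ∈ U → {n ∈ A | U ∩ K n = ∅}.Finite}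

/-- Upper closed limit (Kuratowski): points all of whose open neighborhoods
meet `K n` for infinitely many `n ∈ A`. -/
def kurLs {X : Type*} (t : TopologicalSpace X) (K : ℕ → Set X) (A : Set ℕ) : Set X :=
  {x | ∀ U : Set X, IsOpen[t] U → x ∈ U → {n ∈ A | (U ∩ K n).Nonempty}.Infinite}

/-- A family of subsets of `ℕ` is splitting if every infinite `A ⊆ ℕ` is split
by some member of the family. -/
def IsSplittingFamily (S : Set (Set ℕ)) : Prop :=
  ∀ A : Set ℕ, A.Infinite → ∃ s ∈ S, (A ∩ s).Infinite ∧ (A \ s).Infinite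

open Set Topology TopologicalSpace

lemma kurLi_mono {X : Type*} (t : TopologicalSpace X) (K : ℕ → Set X) {A B : Set ℕ}
    (h : A ⊆ B) : kurLi t K B ⊆ kurLi t K A := fun x hx U hU hxU =>
  (hx U hU hxU).subset fun n hn => ⟨h hn.1, hn.2⟩

lemma kurLs_mono {X : Type*} (t : TopologicalSpace X) (K : ℕ → Set X) {A B : Set ℕ}
    (h : A ⊆ B) : kurLs t K A ⊆ kurLs t K B := fun x hx U hU hxU =>
  (hx U hU hxU).mono fun n hn => ⟨h hn.1, hn.2⟩

lemma kurLi_subset_kurLs {X : Type*} (t : TopologicalSpace X) (K : ℕ → Set X) {A : Set ℕ}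
    (hA : A.Infinite) : kurLi t K A ⊆ kurLs t K A := fun x hx U hU hxU => by
  have hf := hx U hU hxU
  refine (hA.diff hf).mono fun n hn => ?_
  exact ⟨hn.1, Set.nonempty_iff_ne_empty.2 fun h => hn.2 ⟨hn.1, h⟩⟩

lemma kurLi_image {X : Type*} (t : TopologicalSpace X) (K : ℕ → Set X) {e : ℕ → ℕ}
    (he : Function.Injective e) (B : Set ℕ) :
    kurLi t K (e '' B) = kurLi t (fun m => K (e m)) B := by
  ext x
  simp only [kurLi, mem_setOf_eq]
  refine forall₃_congr fun U hU hxU => ?_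
  have hset : {n ∈ e '' B | U ∩ K n = ∅} = e '' {m ∈ B | U ∩ K (e m) = ∅} := by
    ext n
    constructor
    · rintro ⟨⟨m, hm, rfl⟩, h2⟩; exact ⟨m, ⟨hm, h2⟩, rfl⟩
    · rintro ⟨m, ⟨hm, h2⟩, rfl⟩; exact ⟨⟨m, hm, rfl⟩, h2⟩
  rw [hset, Set.finite_image_iff he.injOn]

lemma kurLs_image {X : Type*} (t : TopologicalSpace X) (K : ℕ → Set X) {e : ℕ → ℕ}
    (he : Function.Injective e) (B : Set ℕ) :
    kurLs t K (e '' B) = kurLs t (fun m => K (e m)) B := by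
  ext x
  simp only [kurLs, mem_setOf_eq]
  refine forall₃_congr fun U hU hxU => ?_
  have hset : {n ∈ e '' B | (U ∩ K n).Nonempty} = e '' {m ∈ B | (U ∩ K (e m)).Nonempty} := by
    ext n
    constructor
    · rintro ⟨⟨m, hm, rfl⟩, h2⟩; exact ⟨m, ⟨hm, h2⟩, rfl⟩
    · rintro ⟨m, ⟨hm, h2⟩, rfl⟩; exact ⟨⟨m, hm, rfl⟩, h2⟩
  rw [hset, Set.infinite_image_iff he.injOn]

lemma inl_inter_eq {X Y : Type*} (V : Set X) (S : Set (X ⊕ Y)) :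
    (Sum.inl '' V) ∩ S = Sum.inl '' (V ∩ (Sum.inl ⁻¹' S)) := by
  ext z
  constructor
  · rintro ⟨⟨y, hy, rfl⟩, hz⟩; exact ⟨y, ⟨hy, hz⟩, rfl⟩
  · rintro ⟨y, ⟨hy1, hy2⟩, rfl⟩; exact ⟨⟨y, hy1, rfl⟩, hy2⟩

lemma inr_inter_eq {X Y : Type*} (V : Set Y) (S : Set (X ⊕ Y)) :
    (Sum.inr '' V) ∩ S = Sum.inr '' (V ∩ (Sum.inr ⁻¹' S)) := by
  ext z
  constructor
  · rintro ⟨⟨y, hy, rfl⟩, hz⟩; exact ⟨y, ⟨hy, hz⟩, rfl⟩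
  · rintro ⟨y, ⟨hy1, hy2⟩, rfl⟩; exact ⟨⟨y, hy1, rfl⟩, hy2⟩

lemma kurLi_inl {X Y : Type*} [tX : TopologicalSpace X] [tY : TopologicalSpace Y]
    (K : ℕ → Set (X ⊕ Y)) (A : Set ℕ) (x : X) :
    Sum.inl x ∈ kurLi (inferInstance : TopologicalSpace (X ⊕ Y)) K A ↔
      x ∈ kurLi tX (fun n => Sum.inl ⁻¹' K n) A := by
  constructor
  · intro h V hV hxV
    refine (h _ (isOpenMap_inl V hV) ⟨x, hxV, rfl⟩).subset fun n hn => ⟨hn.1, ?_⟩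
    rw [inl_inter_eq, Set.image_eq_empty]
    exact hn.2
  · intro h U hU hxU
    refine (h (Sum.inl ⁻¹' U) (hU.preimage continuous_inl) hxU).subset fun n hn => ⟨hn.1, ?_⟩
    rw [Set.eq_empty_iff_forall_notMem]
    rintro y ⟨hy1, hy2⟩
    have h2 := hn.2
    rw [Set.eq_empty_iff_forall_notMem] at h2
    exact h2 (Sum.inl y) ⟨hy1, hy2⟩

lemma kurLs_inl {X Y : Type*} [tX : TopologicalSpace X] [tY : TopologicalSpace Y]
    (K : ℕ → Set (X ⊕ Y)) (A : Set ℕ) (x : X) :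
    Sum.inl x ∈ kurLs (inferInstance : TopologicalSpace (X ⊕ Y)) K A ↔
      x ∈ kurLs tX (fun n => Sum.inl ⁻¹' K n) A := by
  constructor
  · intro h V hV hxV
    refine (h _ (isOpenMap_inl V hV) ⟨x, hxV, rfl⟩).mono fun n hn => ⟨hn.1, ?_⟩
    have := hn.2
    rw [inl_inter_eq] at this
    exact this.of_image
  · intro h U hU hxU
    refine (h (Sum.inl ⁻¹' U) (hU.preimage continuous_inl) hxU).mono fun n hn => ⟨hn.1, ?_⟩
    obtain ⟨y, hy1, hy2⟩ := hn.2
    exact ⟨Sum.inl y, hy1, hy2⟩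

lemma kurLi_inr {X Y : Type*} [tX : TopologicalSpace X] [tY : TopologicalSpace Y]
    (K : ℕ → Set (X ⊕ Y)) (A : Set ℕ) (x : Y) :
    Sum.inr x ∈ kurLi (inferInstance : TopologicalSpace (X ⊕ Y)) K A ↔
      x ∈ kurLi tY (fun n => Sum.inr ⁻¹' K n) A := by
  constructor
  · intro h V hV hxV
    refine (h _ (isOpenMap_inr V hV) ⟨x, hxV, rfl⟩).subset fun n hn => ⟨hn.1, ?_⟩
    rw [inr_inter_eq, Set.image_eq_empty]
    exact hn.2
  · intro h U hU hxU
    refine (h (Sum.inr ⁻¹' U) (hU.preimage continuous_inr) hxU).subset fun n hn => ⟨hn.1, ?_⟩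
    rw [Set.eq_empty_iff_forall_notMem]
    rintro y ⟨hy1, hy2⟩
    have h2 := hn.2
    rw [Set.eq_empty_iff_forall_notMem] at h2
    exact h2 (Sum.inr y) ⟨hy1, hy2⟩

lemma kurLs_inr {X Y : Type*} [tX : TopologicalSpace X] [tY : TopologicalSpace Y]
    (K : ℕ → Set (X ⊕ Y)) (A : Set ℕ) (x : Y) :
    Sum.inr x ∈ kurLs (inferInstance : TopologicalSpace (X ⊕ Y)) K A ↔
      x ∈ kurLs tY (fun n => Sum.inr ⁻¹' K n) A := by
  constructor
  · intro h V hV hxV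
    refine (h _ (isOpenMap_inr V hV) ⟨x, hxV, rfl⟩).mono fun n hn => ⟨hn.1, ?_⟩
    have := hn.2
    rw [inr_inter_eq] at this
    exact this.of_image
  · intro h U hU hxU
    refine (h (Sum.inr ⁻¹' U) (hU.preimage continuous_inr) hxU).mono fun n hn => ⟨hn.1, ?_⟩
    obtain ⟨y, hy1, hy2⟩ := hn.2
    exact ⟨Sum.inr y, hy1, hy2⟩

/-- The topological sum of two spaces with the generalized
Bolzano–Weierstrass property again has the property. -/
theorem stmt17 {X Y : Type*} [tX : TopologicalSpace X] [tY : TopologicalSpace Y]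
    (hX : ∀ K : ℕ → Set X, ∃ A : Set ℕ, A.Infinite ∧ kurLi tX K A = kurLs tX K A)
    (hY : ∀ K : ℕ → Set Y, ∃ A : Set ℕ, A.Infinite ∧ kurLi tY K A = kurLs tY K A)
    (K : ℕ → Set (X ⊕ Y)) :
    ∃ A : Set ℕ, A.Infinite ∧
      kurLi (inferInstance : TopologicalSpace (X ⊕ Y)) K A =
        kurLs (inferInstance : TopologicalSpace (X ⊕ Y)) K A := by
  set KX : ℕ → Set X := fun n => Sum.inl ⁻¹' K n with hKX
  set KY : ℕ → Set Y := fun n => Sum.inr ⁻¹' K n with hKY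
  obtain ⟨A₁, hA₁, hXeq⟩ := hX KX
  set e : ℕ → ℕ := Nat.nth (· ∈ A₁) with he
  have heinj : Function.Injective e := Nat.nth_injective (by simpa using hA₁)
  have hemem : ∀ m, e m ∈ A₁ := fun m => Nat.nth_mem_of_infinite (by simpa using hA₁) m
  obtain ⟨B, hB, hYeq⟩ := hY (fun m => KY (e m))
  refine ⟨e '' B, hB.image heinj.injOn, ?_⟩
  have hAsub : e '' B ⊆ A₁ := by rintro n ⟨m, _, rfl⟩; exact hemem m
  have hAinf : (e '' B).Infinite := hB.image heinj.injOn
  have hLiX : kurLi tX KX (e '' B) = kurLs tX KX (e '' B) := by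
    apply Set.Subset.antisymm (kurLi_subset_kurLs tX KX hAinf)
    calc kurLs tX KX (e '' B) ⊆ kurLs tX KX A₁ := kurLs_mono tX KX hAsub
      _ = kurLi tX KX A₁ := hXeq.symm
      _ ⊆ kurLi tX KX (e '' B) := kurLi_mono tX KX hAsub
  have hLiY : kurLi tY KY (e '' B) = kurLs tY KY (e '' B) := by
    rw [kurLi_image tY KY heinj B, kurLs_image tY KY heinj B]
    exact hYeq
  ext z
  cases z with
  | inl x =>
    rw [kurLi_inl K (e '' B) x, kurLs_inl K (e '' B) x, ← hKX, hLiX]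
  | inr y =>
    rw [kurLi_inr K (e '' B) y, kurLs_inr K (e '' B) y, ← hKY, hLiY]
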